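/- If a > b > 0, then Φ(x) = (a^(1/x) - b^(1/x))^x = b · ((a/b)^(1/x) - 1)^x is strictly decreasing on (0,∞), satisfies 0 < Φ(x) < a for all x > 0, tends to a as x → 0⁺, and tends to 0 as x → ∞. -/

import Mathlib

open Real Filter

private lemma subadd {w v r : ℝ} (hw : 0 < w) (hv : 0 < v) (hr0 : 0 < r) (hr1 : r < 1) :
    (w + v) ^ r < w ^ r + v ^ r := by
  have hwv : 0 < w + v := by linarith
  have key : (w + v) ^ r = w * (w + v) ^ (r - 1) + v * (w + v) ^ (r - 1) := by
    rw [← add_mul]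
    have : (w + v) ^ r = (w + v) ^ (1:ℝ) * (w + v) ^ (r - 1) := by
      rw [← Real.rpow_add hwv]; norm_num
    rw [this, Real.rpow_one]
  rw [key]
  have h1 : (w + v) ^ (r - 1) < w ^ (r - 1) :=
    Real.rpow_lt_rpow_of_neg hw (by linarith) (by linarith)
  have h2 : (w + v) ^ (r - 1) < v ^ (r - 1) :=
    Real.rpow_lt_rpow_of_neg hv (by linarith) (by linarith)
  have hw' : w * (w + v) ^ (r - 1) < w ^ r := by
    calc w * (w + v) ^ (r - 1) < w * w ^ (r - 1) := by
          exact mul_lt_mul_of_pos_left h1 hw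
      _ = w ^ r := by
          rw [show w * w ^ (r-1) = w ^ (1:ℝ) * w ^ (r-1) by rw [Real.rpow_one],
            ← Real.rpow_add hw]; norm_num
  have hv' : v * (w + v) ^ (r - 1) < v ^ r := by
    calc v * (w + v) ^ (r - 1) < v * v ^ (r - 1) := by
          exact mul_lt_mul_of_pos_left h2 hv
      _ = v ^ r := by
          rw [show v * v ^ (r-1) = v ^ (1:ℝ) * v ^ (r-1) by rw [Real.rpow_one],
            ← Real.rpow_add hv]; norm_num
  linarith

private lemma subC {u v r : ℝ} (hv : 0 < v) (huv : v < u) (hr0 : 0 < r) (hr1 : r < 1) :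
    u ^ r - v ^ r < (u - v) ^ r := by
  have := subadd (sub_pos.mpr huv) hv hr0 hr1
  rw [sub_add_cancel] at this
  linarith

theorem Phi_properties (a b : ℝ) (hb : 0 < b) (hab : b < a) :
    StrictAntiOn (fun x : ℝ => (a ^ (1 / x) - b ^ (1 / x)) ^ x) (Set.Ioi 0) ∧
    (∀ x : ℝ, 0 < x →
      0 < (a ^ (1 / x) - b ^ (1 / x)) ^ x ∧ (a ^ (1 / x) - b ^ (1 / x)) ^ x < a) ∧
    Filter.Tendsto (fun x : ℝ => (a ^ (1 / x) - b ^ (1 / x)) ^ x)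
      (nhdsWithin 0 (Set.Ioi 0)) (nhds a) ∧
    Filter.Tendsto (fun x : ℝ => (a ^ (1 / x) - b ^ (1 / x)) ^ x)
      Filter.atTop (nhds 0) := by
  have ha : 0 < a := hb.trans hab
  have hbase : ∀ x : ℝ, 0 < x → 0 < a ^ (1 / x) - b ^ (1 / x) := fun x hx =>
    sub_pos.mpr (Real.rpow_lt_rpow hb.le hab (by positivity))
  have hc0 : 0 < b / a := by positivity
  have hc1 : b / a < 1 := (div_lt_one ha).mpr hab
  -- factorization
  have hfact : ∀ x : ℝ, 0 < x →
      (a ^ (1 / x) - b ^ (1 / x)) ^ x = a * (1 - (b / a) ^ (1 / x)) ^ x := by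
    intro x hx
    have hax : (0:ℝ) < a ^ (1 / x) := Real.rpow_pos_of_pos ha _
    have hdiv : (b / a) ^ (1 / x) = b ^ (1 / x) / a ^ (1 / x) :=
      Real.div_rpow hb.le ha.le _
    have h1 : a ^ (1 / x) - b ^ (1 / x) = a ^ (1 / x) * (1 - (b / a) ^ (1 / x)) := by
      rw [hdiv]; field_simp
    have hpos : 0 ≤ 1 - (b / a) ^ (1 / x) := by
      have := Real.rpow_le_one hc0.le hc1.le (by positivity : (0:ℝ) ≤ 1 / x)
      linarith
    rw [h1, Real.mul_rpow hax.le hpos, ← Real.rpow_mul ha.le,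
      one_div_mul_cancel hx.ne', Real.rpow_one]
  refine ⟨?_, ?_, ?_, ?_⟩
  · -- strict anti
    intro x hx y hy hxy
    simp only [Set.mem_Ioi] at hx hy
    set r : ℝ := x / y with hr
    have hr0 : 0 < r := by positivity
    have hr1 : r < 1 := (div_lt_one hy).mpr hxy
    have hu : a ^ (1 / y) = (a ^ (1 / x)) ^ r := by
      rw [← Real.rpow_mul ha.le]
      congr 1; field_simp [hr]; rw [hr]; field_simp
    have hv : b ^ (1 / y) = (b ^ (1 / x)) ^ r := by
      rw [← Real.rpow_mul hb.le]
      congr 1; field_simp [hr]; rw [hr]; field_simp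
    have hvu : b ^ (1 / x) < a ^ (1 / x) := Real.rpow_lt_rpow hb.le hab (by positivity)
    have hkey : a ^ (1 / y) - b ^ (1 / y) < (a ^ (1 / x) - b ^ (1 / x)) ^ r := by
      rw [hu, hv]
      exact subC (Real.rpow_pos_of_pos hb _) hvu hr0 hr1
    have hly : 0 < a ^ (1 / y) - b ^ (1 / y) := hbase y hy
    calc (a ^ (1 / y) - b ^ (1 / y)) ^ y
        < ((a ^ (1 / x) - b ^ (1 / x)) ^ r) ^ y := Real.rpow_lt_rpow hly.le hkey hy
      _ = (a ^ (1 / x) - b ^ (1 / x)) ^ x := by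
          rw [← Real.rpow_mul (hbase x hx).le]
          congr 1; field_simp [hr]; rw [hr]; field_simp
  · -- bounds
    intro x hx
    refine ⟨Real.rpow_pos_of_pos (hbase x hx) x, ?_⟩
    have h1 : a ^ (1 / x) - b ^ (1 / x) < a ^ (1 / x) :=
      sub_lt_self _ (Real.rpow_pos_of_pos hb _)
    calc (a ^ (1 / x) - b ^ (1 / x)) ^ x < (a ^ (1 / x)) ^ x :=
          Real.rpow_lt_rpow (hbase x hx).le h1 hx
      _ = a := by
          rw [← Real.rpow_mul ha.le, one_div_mul_cancel hx.ne', Real.rpow_one]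
  · -- limit at 0+
    have hinv : Tendsto (fun x : ℝ => 1 / x) (nhdsWithin 0 (Set.Ioi 0)) atTop := by
      simpa [one_div] using tendsto_inv_nhdsGT_zero
    have hc : Tendsto (fun x : ℝ => (b / a) ^ (1 / x)) (nhdsWithin 0 (Set.Ioi 0)) (nhds 0) :=
      (tendsto_rpow_atTop_of_base_lt_one (b / a) (by linarith) hc1).comp hinv
    have hone : Tendsto (fun x : ℝ => 1 - (b / a) ^ (1 / x)) (nhdsWithin 0 (Set.Ioi 0))
        (nhds 1) := by
      simpa using tendsto_const_nhds.sub hc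
    have hlog : Tendsto (fun x : ℝ => Real.log (1 - (b / a) ^ (1 / x)))
        (nhdsWithin 0 (Set.Ioi 0)) (nhds 0) := by
      have := (Real.continuousAt_log one_ne_zero).tendsto.comp hone
      simpa [Function.comp_def] using this
    have hid : Tendsto (fun x : ℝ => x) (nhdsWithin 0 (Set.Ioi 0)) (nhds 0) :=
      tendsto_id.mono_left nhdsWithin_le_nhds
    have hmul : Tendsto (fun x : ℝ => x * Real.log (1 - (b / a) ^ (1 / x)))
        (nhdsWithin 0 (Set.Ioi 0)) (nhds 0) := by
      simpa using hid.mul hlog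
    have hexp : Tendsto (fun x : ℝ => a * Real.exp (x * Real.log (1 - (b / a) ^ (1 / x))))
        (nhdsWithin 0 (Set.Ioi 0)) (nhds a) := by
      have h := Real.continuous_exp.continuousAt.tendsto.comp hmul
      simp only [Real.exp_zero] at h
      simpa using tendsto_const_nhds.mul h
    refine hexp.congr' ?_
    filter_upwards [self_mem_nhdsWithin] with x hx
    simp only [Set.mem_Ioi] at hx
    have hpos : 0 < 1 - (b / a) ^ (1 / x) := by
      have := Real.rpow_lt_one hc0.le hc1 (by positivity : (0:ℝ) < 1 / x)
      linarith
    rw [hfact x hx, Real.rpow_def_of_pos hpos, mul_comm x]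
  · -- limit at infinity
    set L : ℝ := Real.log a - Real.log b with hL
    have hL0 : 0 < L := sub_pos.mpr (Real.log_lt_log hb hab)
    set M : ℝ := max a 1 with hM
    have hM1 : (1:ℝ) ≤ M := le_max_right _ _
    have hbound : ∀ x : ℝ, 1 ≤ x → a ^ (1 / x) - b ^ (1 / x) ≤ M * L / x := by
      intro x hx1
      have hx : 0 < x := lt_of_lt_of_le one_pos hx1
      have ht0 : 0 < 1 / x := by positivity
      have ht1 : 1 / x ≤ 1 := by rw [div_le_one hx]; exact hx1
      have haM : a ^ (1 / x) ≤ M := by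
        rcases le_total 1 a with h | h
        · calc a ^ (1 / x) ≤ a ^ (1:ℝ) := Real.rpow_le_rpow_of_exponent_le h ht1
            _ = a := Real.rpow_one a
            _ ≤ M := le_max_left _ _
        · calc a ^ (1 / x) ≤ 1 := Real.rpow_le_one ha.le h ht0.le
            _ ≤ M := hM1
      have hdiv : (b / a) ^ (1 / x) = b ^ (1 / x) / a ^ (1 / x) :=
        Real.div_rpow hb.le ha.le _
      have hax : (0:ℝ) < a ^ (1 / x) := Real.rpow_pos_of_pos ha _
      have h1 : a ^ (1 / x) - b ^ (1 / x) = a ^ (1 / x) * (1 - (b / a) ^ (1 / x)) := by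
        rw [hdiv]; field_simp
      have hexp : 1 - (b / a) ^ (1 / x) ≤ (1 / x) * L := by
        have hc : (b / a) ^ (1 / x) = Real.exp ((1 / x) * Real.log (b / a)) := by
          rw [Real.rpow_def_of_pos hc0]; ring_nf
        have := Real.add_one_le_exp ((1 / x) * Real.log (b / a))
        have hlba : Real.log (b / a) = Real.log b - Real.log a := Real.log_div hb.ne' ha.ne'
        rw [hc]
        nlinarith [this]
      have hnn : 0 ≤ 1 - (b / a) ^ (1 / x) := by
        have := Real.rpow_le_one hc0.le hc1.le ht0.le
        linarith
      calc a ^ (1 / x) - b ^ (1 / x) = a ^ (1 / x) * (1 - (b / a) ^ (1 / x)) := h1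
        _ ≤ M * ((1 / x) * L) := by
            apply mul_le_mul haM hexp hnn (by linarith)
        _ = M * L / x := by ring
    have hhalf : Tendsto (fun x : ℝ => (1 / 2 : ℝ) ^ x) atTop (nhds 0) :=
      tendsto_rpow_atTop_of_base_lt_one _ (by norm_num) (by norm_num)
    apply tendsto_of_tendsto_of_tendsto_of_le_of_le' tendsto_const_nhds hhalf
    · filter_upwards [eventually_ge_atTop (1:ℝ)] with x hx
      exact (Real.rpow_pos_of_pos (hbase x (lt_of_lt_of_le one_pos hx)) x).le
    · filter_upwards [eventually_ge_atTop (max 1 (2 * M * L))] with x hx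
      have hx1 : (1:ℝ) ≤ x := le_trans (le_max_left _ _) hx
      have hx0 : 0 < x := lt_of_lt_of_le one_pos hx1
      have hML : 0 < M * L := by positivity
      have hxML : 2 * M * L ≤ x := le_trans (le_max_right _ _) hx
      have hhalf' : M * L / x ≤ 1 / 2 := by
        rw [div_le_div_iff₀ hx0 (by norm_num)]
        nlinarith
      have := le_trans (hbound x hx1) hhalf'
      exact Real.rpow_le_rpow (hbase x hx0).le this hx0.le
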